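/- Let f : ℂ → ℂ be entire (holomorphic on all of ℂ) with f(z) ≠ 0 for every z ∈ ℂ, f(0) = 1, and suppose there exist constants A, B ≥ 0 such that |f(z)| ≤ exp(A + B|z|²) for all z ∈ ℂ, and that f(z)·f(−z) = exp(−z²) for all z ∈ ℂ. Then there exists b ∈ ℂ such that f(z) = exp(−z²/2 + b·z) for all z ∈ ℂ. -/

import Mathlib

open Complex Metric

noncomputable section

lemma intervalIntegral_conj {f : ℝ → ℂ} {a b : ℝ} :
    ∫ θ in a..b, (starRingEnd ℂ) (f θ) = (starRingEnd ℂ) (∫ θ in a..b, f θ) := by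
  rw [intervalIntegral, intervalIntegral, integral_conj, integral_conj, map_sub]

lemma conj_circleIntegral_zero {g : ℂ → ℂ} (hg : Differentiable ℂ g) (z : ℂ) {R : ℝ}
    (hR : 0 < R) :
    (∮ w in C(z, R), ((w - z) ^ 2)⁻¹ * (starRingEnd ℂ) (g w)) = 0 := by
  have h1 : (∮ w in C(z, R), g w) = 0 :=
    circleIntegral_eq_zero_of_differentiable_on_off_countable hR.le Set.countable_empty
      hg.continuous.continuousOn (fun w _ => hg w)
  have h2 : (∫ θ in (0:ℝ)..2 * Real.pi, circleMap 0 R θ * g (circleMap z R θ)) = 0 := by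
    have : (∮ w in C(z, R), g w)
        = I * ∫ θ in (0:ℝ)..2 * Real.pi, circleMap 0 R θ * g (circleMap z R θ) := by
      simp only [circleIntegral, deriv_circleMap, smul_eq_mul]
      rw [← intervalIntegral.integral_const_mul]
      congr 1; funext θ; ring
    rw [h1] at this
    exact (mul_eq_zero.mp this.symm).resolve_left I_ne_zero
  have key : ∀ θ : ℝ, deriv (circleMap z R) θ •
      (((circleMap z R θ - z) ^ 2)⁻¹ * (starRingEnd ℂ) (g (circleMap z R θ)))
      = (I / (R:ℂ)^2) * (starRingEnd ℂ) (circleMap 0 R θ * g (circleMap z R θ)) := by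
    intro θ
    have hc : circleMap z R θ - z = circleMap 0 R θ := circleMap_sub_center z R θ
    have hne : circleMap 0 R θ ≠ 0 := by
      simpa using circleMap_ne_center (c := (0:ℂ)) (ne_of_gt hR) (θ := θ)
    have habs : (starRingEnd ℂ) (circleMap 0 R θ) * circleMap 0 R θ = (R:ℂ)^2 := by
      rw [mul_comm, Complex.mul_conj, Complex.normSq_eq_norm_sq, norm_circleMap_zero, abs_of_pos hR]
      push_cast; ring
    have hconj : (starRingEnd ℂ) (circleMap 0 R θ) = (R:ℂ)^2 / circleMap 0 R θ :=
      eq_div_iff hne |>.mpr habs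
    rw [deriv_circleMap, hc, smul_eq_mul, map_mul, hconj]
    have hR0 : (R:ℂ) ≠ 0 := by exact_mod_cast hR.ne'
    field_simp
  calc (∮ w in C(z, R), ((w - z) ^ 2)⁻¹ * (starRingEnd ℂ) (g w))
      = ∫ θ in (0:ℝ)..2 * Real.pi,
          (I / (R:ℂ)^2) * (starRingEnd ℂ) (circleMap 0 R θ * g (circleMap z R θ)) := by
        simp only [circleIntegral]; congr 1; funext θ; exact key θ
    _ = (I / (R:ℂ)^2) * (starRingEnd ℂ)
          (∫ θ in (0:ℝ)..2 * Real.pi, circleMap 0 R θ * g (circleMap z R θ)) := by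
        rw [intervalIntegral.integral_const_mul, intervalIntegral_conj]
    _ = 0 := by rw [h2]; simp

lemma abs_deriv_le_of_abs_re_le {g : ℂ → ℂ} (hg : Differentiable ℂ g) (z : ℂ) {R C : ℝ}
    (hR : 0 < R) (hC : ∀ w ∈ sphere z R, |(g w).re| ≤ C) :
    ‖deriv g z‖ ≤ 2 * C / R := by
  have hsub : ∀ w ∈ sphere z R, ((w - z)^2 : ℂ) ≠ 0 := by
    intro w hw
    have : w - z ≠ 0 := sub_ne_zero.mpr (by
      intro h; subst h; simp [mem_sphere_iff_norm] at hw; linarith)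
    exact pow_ne_zero _ this
  have hcont : ContinuousOn (fun w : ℂ => (((w - z)^2)⁻¹ : ℂ)) (sphere z R) :=
    (ContinuousOn.inv₀ (by fun_prop) hsub)
  have hgc : Continuous g := hg.continuous
  have hint1 : CircleIntegrable (fun w => ((w - z)^2)⁻¹ * (2 * ((g w).re : ℂ))) z R :=
    (hcont.mul (Continuous.continuousOn (by continuity))).circleIntegrable hR.le
  have hint2 : CircleIntegrable (fun w => ((w - z)^2)⁻¹ * (starRingEnd ℂ) (g w)) z R :=
    (hcont.mul (Continuous.continuousOn (Complex.continuous_conj.comp hgc))).circleIntegrable hR.le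
  have h2 : (∮ w in C(z, R), ((w - z) ^ 2)⁻¹ * (starRingEnd ℂ) (g w)) = 0 :=
    conj_circleIntegral_zero hg z hR
  have h1 : deriv g z = (2 * Real.pi * I : ℂ)⁻¹ • ∮ w in C(z, R), (w - z) ^ (-2 : ℤ) • g w :=
    by
      have H := (hg.diffContOnCl (s := ball z R)).deriv_eq_smul_circleIntegral hR
      have hfun : (fun w => (w - z) ^ (-2 : ℤ) • g w) = fun w => (1 / (w - z) ^ 2) • g w := by
        funext w; simp [zpow_neg, one_div]
      rw [hfun, H, smul_smul, inv_mul_cancel₀ (by simp [Real.pi_ne_zero, I_ne_zero]), one_smul]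
  have hgeq : ∀ w : ℂ, ((w - z) ^ (-2 : ℤ) • g w)
      = ((w - z)^2)⁻¹ * (2 * ((g w).re : ℂ)) - ((w - z)^2)⁻¹ * (starRingEnd ℂ) (g w) := by
    intro w
    have : (g w) = 2 * ((g w).re : ℂ) - (starRingEnd ℂ) (g w) := by
      rw [Complex.ext_iff]; simp; ring
    rw [smul_eq_mul, zpow_neg]
    push_cast
    rw [← mul_sub, ← this]
    rfl
  have h3 : deriv g z = (2 * Real.pi * I : ℂ)⁻¹ •
      ∮ w in C(z, R), ((w - z)^2)⁻¹ * (2 * ((g w).re : ℂ)) := by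
    rw [h1]
    congr 1
    rw [show (fun w => (w - z) ^ (-2 : ℤ) • g w) = fun w =>
      (((w - z)^2)⁻¹ * (2 * ((g w).re : ℂ)) - ((w - z)^2)⁻¹ * (starRingEnd ℂ) (g w))
      from funext hgeq]
    rw [circleIntegral.integral_sub hint1 hint2, h2, sub_zero]
  have hbound : ∀ w ∈ sphere z R, ‖((w - z)^2)⁻¹ * (2 * ((g w).re : ℂ))‖ ≤ 2 * C / R^2 := by
    intro w hw
    have hwz : ‖w - z‖ = R := mem_sphere_iff_norm.mp hw
    rw [norm_mul, norm_inv, norm_pow, hwz, norm_mul]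
    have h2n : ‖(2:ℂ)‖ = 2 := by norm_num
    have hrn : ‖(((g w).re : ℝ) : ℂ)‖ = |(g w).re| := by
      rw [Complex.norm_real, Real.norm_eq_abs]
    rw [h2n, hrn, div_eq_inv_mul]
    gcongr
    exact hC w hw
  calc ‖deriv g z‖
      = ‖(2 * Real.pi * I : ℂ)⁻¹ • ∮ w in C(z, R), ((w - z)^2)⁻¹ * (2 * ((g w).re : ℂ))‖ := by
        rw [← h3]
    _ ≤ R * (2 * C / R^2) :=
        circleIntegral.norm_two_pi_i_inv_smul_integral_le_of_norm_le_const hR.le hbound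
    _ = 2 * C / R := by field_simp

lemma exists_primitive {h : ℂ → ℂ} (hh : Differentiable ℂ h) :
    ∃ G : ℂ → ℂ, G 0 = 0 ∧ Differentiable ℂ G ∧ ∀ z, deriv G z = h z := by
  set a : ℕ → ℂ := fun n => ((Nat.factorial n : ℕ) : ℂ)⁻¹ * iteratedDeriv n h 0 with ha
  have htaylor : ∀ z : ℂ, HasSum (fun n : ℕ => a n * z ^ n) (h z) := by
    intro z
    have H := Complex.hasSum_taylorSeries_of_entire hh 0 z
    have heq : (fun n : ℕ => (((Nat.factorial n : ℕ) : ℂ))⁻¹ • (z - 0) ^ n • iteratedDeriv n h 0)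
        = fun n => a n * z ^ n := by
      funext n; simp [ha, smul_eq_mul]; ring
    rwa [heq] at H
  have hsummable : ∀ r : ℝ, 0 ≤ r → Summable (fun n => ‖a n‖ * r ^ n) := by
    intro r hr
    have hs := (htaylor ((2 * r + 1 : ℝ) : ℂ)).summable
    have htend : Filter.Tendsto (fun n => ‖a n * ((2 * r + 1 : ℝ) : ℂ) ^ n‖)
        Filter.atTop (nhds 0) := by
      simpa using (hs.tendsto_atTop_zero).norm
    obtain ⟨M, hM⟩ := htend.bddAbove_range
    have hq : r / (2 * r + 1) < 1 := by
      rw [div_lt_one (by linarith)]; linarith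
    have hq0 : 0 ≤ r / (2 * r + 1) := div_nonneg hr (by linarith)
    refine Summable.of_nonneg_of_le (fun n => by positivity)
      (fun n => ?_) ((summable_geometric_of_lt_one hq0 hq).mul_left M)
    have h1 : ‖a n‖ * (2 * r + 1) ^ n ≤ M := by
      have h2 := hM (Set.mem_range_self n)
      rw [norm_mul, norm_pow, Complex.norm_real, Real.norm_eq_abs,
        _root_.abs_of_nonneg (by linarith : (0:ℝ) ≤ 2*r+1)] at h2
      exact h2
    have hpow : (0:ℝ) < (2 * r + 1) ^ n := by positivity
    calc ‖a n‖ * r ^ n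
        = (‖a n‖ * (2 * r + 1) ^ n) * (r / (2 * r + 1)) ^ n := by
          rw [div_pow]; field_simp
      _ ≤ M * (r / (2 * r + 1)) ^ n :=
          mul_le_mul_of_nonneg_right h1 (pow_nonneg hq0 n)
  set F : ℕ → ℂ → ℂ := fun n w => (a n / (n + 1)) * w ^ (n + 1) with hF
  set G : ℂ → ℂ := fun z => ∑' n, F n z with hG
  have hFd : ∀ n : ℕ, Differentiable ℂ (F n) := by
    intro n; exact (differentiable_pow (n+1)).const_mul _
  have hFderiv : ∀ (n : ℕ) (z : ℂ), deriv (F n) z = a n * z ^ n := by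
    intro n z
    rw [hF]
    simp only
    rw [deriv_const_mul _ (differentiable_pow (n+1)).differentiableAt, deriv_pow_field]
    have h1 : ((n:ℂ) + 1) ≠ 0 := Nat.cast_add_one_ne_zero n
    rw [Nat.add_sub_cancel]; push_cast
    field_simp
  have hbound : ∀ r : ℝ, 0 < r → ∀ (n : ℕ) (w : ℂ), w ∈ Metric.ball (0:ℂ) r →
      ‖F n w‖ ≤ ‖a n‖ * r ^ (n+1) := by
    intro r hr n w hw
    have hwr : ‖w‖ ≤ r := le_of_lt (by simpa [Metric.mem_ball] using hw)
    have : ‖F n w‖ = ‖a n‖ / ‖(n:ℂ)+1‖ * ‖w‖ ^ (n+1) := by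
      simp [hF, map_mul, map_div₀, map_pow]
    rw [this]
    have h1 : (1:ℝ) ≤ ‖(n:ℂ)+1‖ := by
      have he : ((n:ℂ)+1) = ((n+1 : ℕ) : ℂ) := by push_cast; ring
      rw [he, Complex.norm_natCast]
      exact_mod_cast Nat.succ_le_succ (Nat.zero_le n)
    have h2 : ‖a n‖ / ‖(n:ℂ)+1‖ ≤ ‖a n‖ :=
      div_le_self (norm_nonneg _) h1
    have hw2 : ‖w‖ ^ (n+1) ≤ r ^ (n+1) :=
      pow_le_pow_left₀ (norm_nonneg _) hwr _
    exact mul_le_mul h2 hw2 (by positivity) (norm_nonneg _)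
  have hsum2 : ∀ r : ℝ, 0 ≤ r → Summable (fun n => ‖a n‖ * r ^ (n+1)) := by
    intro r hr
    simpa [pow_succ, mul_comm, mul_left_comm, mul_assoc] using ((hsummable r hr).mul_left r)
  have hGdiff : ∀ z : ℂ, DifferentiableAt ℂ G z ∧ deriv G z = h z := by
    intro z
    set r : ℝ := ‖z‖ + 1 with hr
    have hrpos : 0 < r := by positivity
    have hzr : z ∈ Metric.ball (0:ℂ) r := by
      rw [Metric.mem_ball, dist_zero_right, hr]
      linarith
    have hdOn : DifferentiableOn ℂ G (Metric.ball (0:ℂ) r) :=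
      Complex.differentiableOn_tsum_of_summable_norm (hsum2 r hrpos.le)
        (fun n => (hFd n).differentiableOn) Metric.isOpen_ball (hbound r hrpos)
    have hdAt : DifferentiableAt ℂ G z :=
      hdOn.differentiableAt (Metric.isOpen_ball.mem_nhds hzr)
    refine ⟨hdAt, ?_⟩
    have hds := Complex.hasSum_deriv_of_summable_norm (hsum2 r hrpos.le)
      (fun n => (hFd n).differentiableOn) Metric.isOpen_ball (hbound r hrpos) hzr
    have heq2 : (fun n => deriv (F n) z) = fun n => a n * z ^ n := funext (fun n => hFderiv n z)
    rw [heq2] at hds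
    exact hds.unique (htaylor z)
  refine ⟨G, ?_, fun z => (hGdiff z).1, fun z => (hGdiff z).2⟩
  rw [hG]
  simp only
  have : ∀ n : ℕ, F n 0 = 0 := by
    intro n; simp [hF]
  simp [this]

lemma deriv_entire {f : ℂ → ℂ} (hf : Differentiable ℂ f) : Differentiable ℂ (deriv f) := by
  have h : ContDiff ℂ 2 f := hf.contDiff
  rw [show (2 : WithTop ℕ∞) = 1 + 1 by norm_num] at h
  exact (contDiff_succ_iff_deriv.mp h).2.2.differentiable one_ne_zero

lemma exists_log {f : ℂ → ℂ} (hf : Differentiable ℂ f) (hne : ∀ z, f z ≠ 0) (h0 : f 0 = 1) :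
    ∃ g : ℂ → ℂ, g 0 = 0 ∧ Differentiable ℂ g ∧ ∀ z, Complex.exp (g z) = f z := by
  have hd : Differentiable ℂ (fun z => deriv f z / f z) :=
    (deriv_entire hf).div hf hne
  obtain ⟨G, hG0, hGd, hGderiv⟩ := exists_primitive hd
  set φ : ℂ → ℂ := fun z => f z * Complex.exp (-G z) with hφ
  have hφd : ∀ z, HasDerivAt φ 0 z := by
    intro z
    have h1 : HasDerivAt f (deriv f z) z := (hf z).hasDerivAt
    have h2 : HasDerivAt (fun z => Complex.exp (-G z)) (Complex.exp (-G z) * (-(deriv f z / f z))) z := by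
      have hG : HasDerivAt G (deriv G z) z := (hGd z).hasDerivAt
      have := (hG.neg).cexp
      rw [hGderiv] at this
      exact this
    have := h1.mul h2
    refine this.congr_deriv ?_
    field_simp [hne z]
    ring
  have hφconst : ∀ z, φ z = 1 := by
    intro z
    have : φ z = φ 0 := by
      apply is_const_of_deriv_eq_zero (fun x => (hφd x).differentiableAt)
      intro x; exact (hφd x).deriv
    rw [this, hφ]
    simp [h0, hG0]
  refine ⟨G, hG0, hGd, fun z => ?_⟩
  have := hφconst z
  rw [hφ] at this
  simp only at this
  have hexpne : Complex.exp (-G z) ≠ 0 := Complex.exp_ne_zero _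
  rw [Complex.exp_neg] at this
  field_simp at this
  exact this.symm


/-- An entire nonvanishing function `f` with `f 0 = 1`, of order at most two
(`|f z| ≤ exp (A + B |z|²)`), satisfying `f z · f (−z) = exp (−z²)`, is of the form
`f z = exp (−z²/2 + b z)`. -/
theorem entire_functional_equation_form
    (f : ℂ → ℂ) (hf : Differentiable ℂ f) (hne : ∀ z, f z ≠ 0) (h0 : f 0 = 1)
    (A B : ℝ) (hA : 0 ≤ A) (hB : 0 ≤ B)
    (hgrowth : ∀ z, ‖f z‖ ≤ Real.exp (A + B * ‖z‖ ^ 2))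
    (hfeq : ∀ z, f z * f (-z) = Complex.exp (-z ^ 2)) :
    ∃ b : ℂ, ∀ z, f z = Complex.exp (-z ^ 2 / 2 + b * z) := by
  obtain ⟨g, hg0, hgd, hgexp⟩ := exists_log hf hne h0
  -- Step 1: g z + g (-z) + z ^ 2 = 0
  have hfun : ∀ z : ℂ, g (-z) = -g z - z ^ 2 := by
    have hqd : Differentiable ℂ (fun z : ℂ => g z + g (-z) + z ^ 2) :=
      ((hgd.add (hgd.comp differentiable_neg)).add (differentiable_pow 2))
    have hexpq : ∀ z : ℂ, Complex.exp (g z + g (-z) + z ^ 2) = 1 := by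
      intro z
      rw [Complex.exp_add, Complex.exp_add, hgexp, hgexp, hfeq z, ← Complex.exp_add]
      simp
    have hderiv : ∀ z, deriv (fun z : ℂ => g z + g (-z) + z ^ 2) z = 0 := by
      intro z
      have h1 : HasDerivAt (fun z : ℂ => Complex.exp (g z + g (-z) + z ^ 2))
          (Complex.exp (g z + g (-z) + z ^ 2) *
            deriv (fun z : ℂ => g z + g (-z) + z ^ 2) z) z :=
        ((hqd z).hasDerivAt).cexp
      have h2 : (fun z : ℂ => Complex.exp (g z + g (-z) + z ^ 2)) = fun _ => (1:ℂ) :=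
        funext hexpq
      rw [h2] at h1
      have h3 := h1.unique (hasDerivAt_const z (1:ℂ))
      have hexpne := Complex.exp_ne_zero (g z + g (-z) + z ^ 2)
      exact (mul_eq_zero.mp h3).resolve_left hexpne
    intro z
    have hc : g z + g (-z) + z ^ 2 = g 0 + g (-0) + 0 ^ 2 :=
      is_const_of_deriv_eq_zero hqd hderiv z 0
    rw [hg0] at hc
    simp [hg0] at hc
    linear_combination hc
  -- Step 2: u := g + z^2/2 is odd
  set u : ℂ → ℂ := fun z => g z + z ^ 2 / 2 with hu
  have hud : Differentiable ℂ u := hgd.add ((differentiable_pow 2).div_const 2)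
  have hu0 : u 0 = 0 := by simp [hu, hg0]
  have huodd : ∀ z, u (-z) = -u z := by
    intro z
    simp only [hu]
    rw [hfun z]
    ring
  -- Step 3: |Re (u z)| ≤ A + C0 * |z|^2
  set C0 : ℝ := B + 1/2 with hC0
  have hgre : ∀ z, (g z).re ≤ A + B * ‖z‖ ^ 2 := by
    intro z
    have h1 : ‖Complex.exp (g z)‖ = Real.exp ((g z).re) := Complex.norm_exp _
    have h2 := hgrowth z
    rw [← hgexp z, h1] at h2
    exact (Real.exp_le_exp.mp h2)
  have hure : ∀ z, (u z).re ≤ A + C0 * ‖z‖ ^ 2 := by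
    intro z
    have h1 : (u z).re = (g z).re + (z ^ 2).re / 2 := by
      simp [hu, Complex.add_re, Complex.div_re]
    have h2 : (z ^ 2).re ≤ ‖z‖ ^ 2 := by
      calc (z ^ 2).re ≤ ‖z ^ 2‖ := Complex.re_le_norm _
        _ = ‖z‖ ^ 2 := by rw [norm_pow]
    rw [h1, hC0]
    have := hgre z
    linarith
  have hureabs : ∀ z, |(u z).re| ≤ A + C0 * ‖z‖ ^ 2 := by
    intro z
    rw [abs_le]
    constructor
    · have h1 := hure (-z)
      rw [huodd z] at h1
      simp only [Complex.neg_re, norm_neg] at h1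
      linarith
    · exact hure z
  -- Step 4: |deriv u z| ≤ K * (1 + |z|)
  set K : ℝ := 2 * A + 8 * C0 with hK
  have hK0 : 0 < K := by rw [hK, hC0]; linarith
  set v : ℂ → ℂ := deriv u with hv
  have hvd : Differentiable ℂ v := deriv_entire hud
  have hvb : ∀ z, ‖v z‖ ≤ K * (1 + ‖z‖) := by
    intro z
    set R : ℝ := 1 + ‖z‖ with hR
    have hR1 : (1:ℝ) ≤ R := by rw [hR]; linarith [norm_nonneg z]
    have hRpos : (0:ℝ) < R := by linarith
    have hC : ∀ w ∈ sphere z R, |(u w).re| ≤ A + 4 * C0 * R ^ 2 := by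
      intro w hw
      have hwz : ‖w - z‖ = R := mem_sphere_iff_norm.mp hw
      have habsw : ‖w‖ ≤ 2 * R := by
        calc ‖w‖ = ‖(w - z) + z‖ := by ring_nf
          _ ≤ ‖w - z‖ + ‖z‖ := norm_add_le _ _
          _ = R + ‖z‖ := by rw [hwz]
          _ ≤ 2 * R := by rw [hR]; linarith [norm_nonneg z]
      have hC0pos : (0:ℝ) < C0 := by rw [hC0]; linarith
      have hsq : ‖w‖ ^ 2 ≤ (2 * R) ^ 2 := by
        apply pow_le_pow_left₀ (norm_nonneg _) habsw
      calc |(u w).re| ≤ A + C0 * ‖w‖ ^ 2 := hureabs w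
        _ ≤ A + C0 * (2 * R) ^ 2 := by nlinarith
        _ = A + 4 * C0 * R ^ 2 := by ring
    have hkey := abs_deriv_le_of_abs_re_le hud z hRpos hC
    rw [← hv] at hkey
    have hC0pos : (0:ℝ) < C0 := by rw [hC0]; linarith
    have h1 : 2 * A / R ≤ 2 * A := div_le_self (by linarith) hR1
    calc ‖v z‖ ≤ 2 * (A + 4 * C0 * R ^ 2) / R := hkey
      _ = 2 * A / R + 8 * C0 * R := by field_simp; ring
      _ ≤ 2 * A + 8 * C0 * R := by linarith
      _ ≤ K * R := by rw [hK]; nlinarith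
      _ = K * (1 + ‖z‖) := by rw [hR]
  -- Step 5: deriv v is bounded, hence constant
  set w : ℂ → ℂ := deriv v with hw
  have hwd : Differentiable ℂ w := deriv_entire hvd
  have hwb : ∀ z, ‖w z‖ ≤ 2 * K := by
    intro z
    set R : ℝ := 1 + ‖z‖ with hR
    have hR1 : (1:ℝ) ≤ R := by rw [hR]; linarith [norm_nonneg z]
    have hRpos : (0:ℝ) < R := by linarith
    have hC : ∀ ζ ∈ sphere z R, ‖v ζ‖ ≤ 2 * K * R := by
      intro ζ hζ
      have hwz : ‖ζ - z‖ = R := mem_sphere_iff_norm.mp hζ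
      have habsw : ‖ζ‖ ≤ 2 * R - 1 := by
        calc ‖ζ‖ = ‖(ζ - z) + z‖ := by ring_nf
          _ ≤ ‖ζ - z‖ + ‖z‖ := norm_add_le _ _
          _ = R + ‖z‖ := by rw [hwz]
          _ = 2 * R - 1 := by rw [hR]; ring
      calc ‖v ζ‖ = ‖v ζ‖ := rfl
        _ ≤ K * (1 + ‖ζ‖) := hvb ζ
        _ ≤ K * (2 * R) := mul_le_mul_of_nonneg_left (by linarith) hK0.le
        _ = 2 * K * R := by ring
    have := Complex.norm_deriv_le_of_forall_mem_sphere_norm_le hRpos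
      (hvd.diffContOnCl) hC
    rw [← hw] at this
    calc ‖w z‖ ≤ 2 * K * R / R := this
      _ = 2 * K := by field_simp
  have hwconst : ∀ z, w z = w 0 := by
    intro z
    apply hwd.apply_eq_apply_of_bounded
    rw [Metric.isBounded_iff_subset_closedBall 0]
    exact ⟨2 * K, fun x hx => by
      obtain ⟨z, rfl⟩ := hx
      simpa [Metric.mem_closedBall, dist_zero_right] using hwb z⟩
  -- Step 6: integrate back twice
  set c2 : ℂ := w 0 with hc2
  have hvform : ∀ z, v z = v 0 + c2 * z := by
    intro z
    have hp : ∀ x : ℂ, HasDerivAt (fun t => v t - c2 * t) 0 x := by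
      intro x
      have h1 : HasDerivAt v (w x) x := (hvd x).hasDerivAt
      have h2 : HasDerivAt (fun t : ℂ => c2 * t) c2 x := by
        simpa using (hasDerivAt_id x).const_mul c2
      have := h1.sub h2
      rw [hwconst x] at this
      exact this.congr_deriv (sub_eq_zero.mpr rfl)
    have := is_const_of_deriv_eq_zero (fun x => (hp x).differentiableAt)
      (fun x => (hp x).deriv) z 0
    simp only [mul_zero, sub_zero] at this
    linear_combination this
  have huform : ∀ z, u z = v 0 * z + c2 * z ^ 2 / 2 := by
    intro z
    have hp : ∀ x : ℂ, HasDerivAt (fun t => u t - (v 0 * t + c2 * t ^ 2 / 2)) 0 x := by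
      intro x
      have h1 : HasDerivAt u (v x) x := (hud x).hasDerivAt
      have h2 : HasDerivAt (fun t : ℂ => v 0 * t + c2 * t ^ 2 / 2) (v 0 + c2 * x) x := by
        have ha : HasDerivAt (fun t : ℂ => v 0 * t) (v 0) x := by
          simpa using (hasDerivAt_id x).const_mul (v 0)
        have hb : HasDerivAt (fun t : ℂ => c2 * t ^ 2 / 2) (c2 * x) x := by
          have := ((hasDerivAt_pow 2 x).const_mul c2).div_const 2
          refine this.congr_deriv ?_
          ring_nf
        exact ha.add hb
      have := h1.sub h2
      rw [hvform x] at this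
      exact this.congr_deriv (sub_self _)
    have h9 := is_const_of_deriv_eq_zero (fun x => (hp x).differentiableAt)
      (fun x => (hp x).deriv) z 0
    have h10 : u 0 - (v 0 * 0 + c2 * 0 ^ 2 / 2) = 0 := by rw [hu0]; ring
    rw [h10] at h9
    linear_combination h9
  -- Step 7: oddness kills c2
  have hc2zero : c2 = 0 := by
    have h1 := huodd 1
    rw [huform 1, huform (-1)] at h1
    simp at h1
    linear_combination h1
  -- Conclusion
  refine ⟨v 0, fun z => ?_⟩
  rw [← hgexp z]
  congr 1
  have := huform z
  rw [hc2zero] at this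
  simp only [hu] at this
  linear_combination this
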